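/- Let f₁(x) = e^{-πα₁x²} Σ_p a_p e((r₁p − γ₁)x) and f₂(x) = e^{-πα₂x²} Σ_q b_q e((r₂q − γ₂)x), where α₁, α₂ > 0, r₁, r₂, γ₁, γ₂ are real, (a_p), (b_q) are rapidly decreasing complex sequences indexed by ℤ, and α = α₁ + α₂. Then for all real s, t: ∫_ℝ conj(f₁(x)) f₂(x+s) e(tx) dx = (1/√α) e(−α₂st/α) e^{-πα₁α₂s²/α} e^{-πt²/α} e^{-π(γ₁−γ₂)²/α} e^{2π(γ₂−γ₁)t/α} e(−(α₂γ₁+α₁γ₂)s/α) · Θ(s,t), where Θ(s,t) = Σ_{p,q} conj(a_p) b_q e((α₁r₂q + α₂r₁p)s/α) exp((2π/α)(γ₂−γ₁)(r₂q−r₁p)) exp(−(π/α)[(r₂q−r₁p)² + 2t(r₂q−r₁p)]). -/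

import Mathlib

open MeasureTheory Real Complex

set_option maxHeartbeats 2000000

lemma aux_summable_norm (a : ℤ → ℂ)
    (ha : ∀ k : ℕ, ∃ C : ℝ, ∀ p : ℤ, (|p| : ℝ) ^ k * ‖a p‖ ≤ C) :
    Summable fun p => ‖a p‖ := by
  obtain ⟨C, hC⟩ := ha 2
  have hs : Summable fun p : ℤ => C * (1 / (p:ℝ)^2) :=
    (Real.summable_one_div_int_pow.mpr one_lt_two).mul_left C
  apply Summable.of_norm_bounded_eventually hs
  rw [Filter.eventually_cofinite]
  apply Set.Finite.subset (Set.finite_singleton (0:ℤ))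
  intro p hp
  simp only [Set.mem_setOf_eq, Set.mem_singleton_iff] at *
  by_contra h0
  apply hp
  have hp2 : (0:ℝ) < (p:ℝ)^2 := by positivity
  rw [Real.norm_of_nonneg (norm_nonneg _), mul_one_div, le_div_iff₀ hp2]
  calc ‖a p‖ * (p:ℝ)^2 = (|p|:ℝ)^2 * ‖a p‖ := by push_cast [_root_.sq_abs]; ring
  _ ≤ C := hC p

lemma aux_exponent (α α₁ α₂ s t γ₁ γ₂ r₁ r₂ : ℝ) (p q : ℤ)
    (hαpos : 0 < α) (hrel : α = α₁ + α₂) :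
    ((-π*α₂*s^2 : ℝ):ℂ) + ((2*π*((r₂*(q:ℝ)-γ₂)*s) : ℝ):ℂ)*Complex.I +
      (((-2*π*α₂*s : ℝ):ℂ) + ((2*π*(r₂*(q:ℝ) - r₁*(p:ℝ) + γ₁ - γ₂ + t) : ℝ):ℂ)*Complex.I)^2
        / (4*(π:ℂ)*(α:ℂ))
    = (-2 * π * Complex.I * (α₂ * s * t / α)) + (-π * α₁ * α₂ * s ^ 2 / α) +
      (-π * t ^ 2 / α) + (-π * (γ₁ - γ₂) ^ 2 / α) + (2 * π * (γ₂ - γ₁) * t / α) +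
      (-2 * π * Complex.I * ((α₂ * γ₁ + α₁ * γ₂) * s / α)) +
      (2 * π * Complex.I * ((α₁ * r₂ * (q:ℂ) + α₂ * r₁ * (p:ℂ)) * s / α)) +
      ((2 * π / α) * (γ₂ - γ₁) * (r₂ * (q:ℂ) - r₁ * (p:ℂ))) +
      (-(π / α) * ((r₂ * (q:ℂ) - r₁ * (p:ℂ)) ^ 2 + 2 * t * (r₂ * (q:ℂ) - r₁ * (p:ℂ)))) := by
  have hsq : (((-2*π*α₂*s : ℝ):ℂ) + ((2*π*(r₂*(q:ℝ) - r₁*(p:ℝ) + γ₁ - γ₂ + t) : ℝ):ℂ)*Complex.I)^2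
      = (((-2*π*α₂*s)^2 - (2*π*(r₂*(q:ℝ) - r₁*(p:ℝ) + γ₁ - γ₂ + t))^2 : ℝ):ℂ)
        + ((2*(-2*π*α₂*s)*(2*π*(r₂*(q:ℝ) - r₁*(p:ℝ) + γ₁ - γ₂ + t)) : ℝ):ℂ)*Complex.I := by
    push_cast
    linear_combination (2*(π:ℂ)*((r₂:ℂ)*(q:ℂ) - (r₁:ℂ)*(p:ℂ) + γ₁ - γ₂ + t))^2 * Complex.I_sq
  rw [hsq]
  have hα0 : (α:ℂ) ≠ 0 := by norm_cast; positivity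
  have hπ : ((π : ℝ):ℂ) ≠ 0 := by norm_cast; exact Real.pi_ne_zero
  have hα1 : ((α₁:ℝ):ℂ) = (α:ℂ) - α₂ := by rw [hrel]; push_cast; ring
  have h5 : ((α:ℂ))^5 * (((α:ℂ))⁻¹)^5 = 1 := by
    rw [← mul_pow, mul_inv_cancel₀ hα0, one_pow]
  push_cast
  rw [hα1]
  field_simp
  ring

lemma aux_sqrt (α : ℝ) (hα : 0 < α) :
    ((Real.pi:ℂ) / -(((-(Real.pi*α)):ℝ):ℂ)) ^ (1/2 : ℂ) = 1 / ((Real.sqrt α : ℝ):ℂ) := by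
  have h1 : ((Real.pi:ℂ) / -(((-(Real.pi*α)):ℝ):ℂ)) = ((1/α : ℝ):ℂ) := by
    have : (α:ℂ) ≠ 0 := by norm_cast; positivity
    have hπ : ((Real.pi : ℝ):ℂ) ≠ 0 := by norm_cast; exact Real.pi_ne_zero
    push_cast
    field_simp
  rw [h1, show (1/2:ℂ) = ((1/2:ℝ):ℂ) by norm_num, ← Complex.ofReal_cpow (by positivity) _]
  rw [show (1/α)^((1:ℝ)/2) = Real.sqrt (1/α) from (Real.sqrt_eq_rpow _).symm]
  rw [one_div, Real.sqrt_inv]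
  push_cast
  rw [one_div]

theorem gaussian_theta_inner_product
    (α₁ α₂ r₁ r₂ γ₁ γ₂ : ℝ) (hα₁ : 0 < α₁) (hα₂ : 0 < α₂)
    (α : ℝ) (hα : α = α₁ + α₂)
    (a b : ℤ → ℂ)
    (ha : ∀ k : ℕ, ∃ C : ℝ, ∀ p : ℤ, (|p| : ℝ) ^ k * ‖a p‖ ≤ C)
    (hb : ∀ k : ℕ, ∃ C : ℝ, ∀ q : ℤ, (|q| : ℝ) ^ k * ‖b q‖ ≤ C)
    (f₁ f₂ : ℝ → ℂ)
    (hf₁ : ∀ x : ℝ, f₁ x = Complex.exp (-Real.pi * α₁ * x ^ 2) *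
      ∑' p : ℤ, a p * Complex.exp (2 * Real.pi * Complex.I * ((r₁ * p - γ₁) * x)))
    (hf₂ : ∀ x : ℝ, f₂ x = Complex.exp (-Real.pi * α₂ * x ^ 2) *
      ∑' q : ℤ, b q * Complex.exp (2 * Real.pi * Complex.I * ((r₂ * q - γ₂) * x)))
    (s t : ℝ) :
    ∫ x : ℝ, (starRingEnd ℂ) (f₁ x) * f₂ (x + s) * Complex.exp (2 * Real.pi * Complex.I * (t * x))
      = (1 / Real.sqrt α) * Complex.exp (-2 * Real.pi * Complex.I * (α₂ * s * t / α)) *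
        Complex.exp (-Real.pi * α₁ * α₂ * s ^ 2 / α) *
        Complex.exp (-Real.pi * t ^ 2 / α) *
        Complex.exp (-Real.pi * (γ₁ - γ₂) ^ 2 / α) *
        Complex.exp (2 * Real.pi * (γ₂ - γ₁) * t / α) *
        Complex.exp (-2 * Real.pi * Complex.I * ((α₂ * γ₁ + α₁ * γ₂) * s / α)) *
        ∑' pq : ℤ × ℤ,
          (starRingEnd ℂ) (a pq.1) * b pq.2 *
            Complex.exp (2 * Real.pi * Complex.I * ((α₁ * r₂ * pq.2 + α₂ * r₁ * pq.1) * s / α)) *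
            Complex.exp ((2 * Real.pi / α) * (γ₂ - γ₁) * (r₂ * pq.2 - r₁ * pq.1)) *
            Complex.exp (-(Real.pi / α) *
              ((r₂ * pq.2 - r₁ * pq.1) ^ 2 + 2 * t * (r₂ * pq.2 - r₁ * pq.1))) := by
  have hαpos : 0 < α := by rw [hα]; positivity
  have hα0 : (α:ℂ) ≠ 0 := by norm_cast; positivity
  have hαC : (α:ℂ) = (α₁:ℂ) + (α₂:ℂ) := by rw [hα]; push_cast; ring
  have hsa := aux_summable_norm a ha
  have hsb := aux_summable_norm b hb
  -- quadratic data
  set c : ℤ × ℤ → ℂ := fun pq =>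
    ((-2*π*α₂*s : ℝ):ℂ) + ((2*π*(r₂*pq.2 - r₁*pq.1 + γ₁ - γ₂ + t) : ℝ):ℂ)*Complex.I with hc
  set d : ℤ × ℤ → ℂ := fun pq =>
    ((-π*α₂*s^2 : ℝ):ℂ) + ((2*π*((r₂*pq.2-γ₂)*s) : ℝ):ℂ)*Complex.I with hd
  set F : ℤ × ℤ → ℝ → ℂ := fun pq x =>
    (starRingEnd ℂ) (a pq.1) * b pq.2 *
      Complex.exp (((-(π*α) : ℝ):ℂ) * (x:ℂ)^2 + c pq * (x:ℂ) + d pq) with hF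
  -- pointwise identity
  have hnormθ : ∀ θ : ℝ, ‖Complex.exp ((θ:ℂ) * Complex.I)‖ = 1 := fun θ => by
    rw [Complex.norm_exp_ofReal_mul_I]
  have hnormexp : ∀ z : ℂ, ‖Complex.exp z‖ = rexp z.re := fun z => by
    rw [Complex.norm_exp]
  have hpt : ∀ x : ℝ,
      (starRingEnd ℂ) (f₁ x) * f₂ (x + s) * Complex.exp (2 * Real.pi * Complex.I * (t * x))
        = ∑' pq : ℤ × ℤ, F pq x := by
    intro x
    have hconj : (starRingEnd ℂ) (f₁ x)
        = Complex.exp (((-(π*α₁*x^2) : ℝ):ℂ)) *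
          ∑' p : ℤ, (starRingEnd ℂ) (a p) *
            Complex.exp (((-(2*π*((r₁*(p:ℝ)-γ₁)*x)) : ℝ):ℂ) * Complex.I) := by
      rw [hf₁ x, map_mul]
      congr 1
      · rw [← Complex.exp_conj]
        congr 1
        simp only [map_mul, map_neg, map_pow, Complex.conj_ofReal]
        push_cast
        ring
      · rw [starRingEnd_apply, tsum_star]
        refine tsum_congr fun p => ?_
        calc star (a p * Complex.exp (2 * Real.pi * Complex.I * ((r₁ * (p:ℂ) - γ₁) * (x:ℂ))))
            = (starRingEnd ℂ) (a p) *
                Complex.exp ((starRingEnd ℂ) (2 * Real.pi * Complex.I * ((r₁ * (p:ℂ) - γ₁) * (x:ℂ)))) := by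
              rw [← starRingEnd_apply, map_mul, ← Complex.exp_conj]
          _ = (starRingEnd ℂ) (a p) *
                Complex.exp (((-(2*π*((r₁*(p:ℝ)-γ₁)*x)) : ℝ):ℂ) * Complex.I) := by
              congr 1
              simp only [map_mul, map_sub, Complex.conj_ofReal, Complex.conj_I, map_ofNat,
                map_intCast]
              push_cast
              ring
    have hB : f₂ (x + s)
        = Complex.exp (((-(π*α₂*(x+s)^2) : ℝ):ℂ)) *
          ∑' q : ℤ, b q *
            Complex.exp (((2*π*((r₂*(q:ℝ)-γ₂)*(x+s)) : ℝ):ℂ) * Complex.I) := by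
      rw [hf₂ (x+s)]
      congr 1
      · congr 1
        push_cast
        ring
      · refine tsum_congr fun q => ?_
        congr 1
        congr 1
        push_cast
        ring
    rw [hconj, hB]
    have hA' : Summable fun p : ℤ => ‖(starRingEnd ℂ) (a p) *
        Complex.exp (((-(2*π*((r₁*(p:ℝ)-γ₁)*x)) : ℝ):ℂ) * Complex.I)‖ := by
      apply hsa.congr
      intro p
      rw [norm_mul, RCLike.norm_conj, hnormθ, mul_one]
    have hB' : Summable fun q : ℤ => ‖b q *
        Complex.exp (((2*π*((r₂*(q:ℝ)-γ₂)*(x+s)) : ℝ):ℂ) * Complex.I)‖ := by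
      apply hsb.congr
      intro q
      rw [norm_mul, hnormθ, mul_one]
    have rearr : ∀ (u v w SA SB : ℂ), u * SA * (v * SB) * w = (u*v*w) * (SA*SB) := by
      intros; ring
    rw [rearr]
    rw [tsum_mul_tsum_of_summable_norm hA' hB']
    rw [← tsum_mul_left]
    refine tsum_congr fun pq => ?_
    simp only [hF, hc, hd]
    have hmerge : Complex.exp (((-(π*α) : ℝ):ℂ) * (x:ℂ)^2 +
          (((-2*π*α₂*s : ℝ):ℂ) + ((2*π*(r₂*pq.2 - r₁*pq.1 + γ₁ - γ₂ + t) : ℝ):ℂ)*Complex.I) * (x:ℂ) +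
          (((-π*α₂*s^2 : ℝ):ℂ) + ((2*π*((r₂*pq.2-γ₂)*s) : ℝ):ℂ)*Complex.I))
        = Complex.exp (((-(π*α₁*x^2) : ℝ):ℂ)) * Complex.exp (((-(π*α₂*(x+s)^2) : ℝ):ℂ)) *
          Complex.exp (2 * Real.pi * Complex.I * (t * x)) *
          Complex.exp (((-(2*π*((r₁*(pq.1:ℝ)-γ₁)*x)) : ℝ):ℂ) * Complex.I) *
          Complex.exp (((2*π*((r₂*(pq.2:ℝ)-γ₂)*(x+s)) : ℝ):ℂ) * Complex.I) := by
      rw [← Complex.exp_add, ← Complex.exp_add, ← Complex.exp_add, ← Complex.exp_add]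
      congr 1
      push_cast
      rw [hαC]
      ring
    rw [hmerge]
    ring
  -- integrability
  have hbneg : (((-(π*α)) : ℝ):ℂ).re < 0 := by
    simpa using (by positivity : (0:ℝ) < π*α)
  have hInt : ∀ pq : ℤ × ℤ, Integrable (F pq) := by
    intro pq
    exact (integrable_cexp_quadratic' hbneg (c pq) (d pq)).const_mul _
  -- summability of norms of integrals
  have hnormθ : ∀ θ : ℝ, ‖Complex.exp ((θ:ℂ) * Complex.I)‖ = 1 := fun θ => by
    rw [Complex.norm_exp_ofReal_mul_I]
  have hnormexp : ∀ z : ℂ, ‖Complex.exp z‖ = Real.exp z.re := fun z => by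
    rw [Complex.norm_exp]
  have hFnorm : ∀ (pq : ℤ × ℤ) (x : ℝ), ‖F pq x‖ = ‖a pq.1‖ * ‖b pq.2‖ *
      Real.exp (-(π*α)*x^2 + (-2*π*α₂*s)*x + (-π*α₂*s^2)) := by
    intro pq x
    simp only [hF, hc, hd]
    rw [norm_mul, norm_mul, RCLike.norm_conj, hnormexp]
    congr 1
    congr 1
    simp only [Complex.add_re, Complex.mul_re, ← Complex.ofReal_pow, Complex.ofReal_re,
      Complex.ofReal_im, Complex.I_re, Complex.I_im]
    ring
  have hSumNorm : Summable fun pq : ℤ × ℤ => ∫ x : ℝ, ‖F pq x‖ := by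
    have h1 : ∀ pq : ℤ × ℤ, (∫ x : ℝ, ‖F pq x‖) = (‖a pq.1‖ * ‖b pq.2‖) *
        ∫ x : ℝ, Real.exp (-(π*α)*x^2 + (-2*π*α₂*s)*x + (-π*α₂*s^2)) := by
      intro pq
      simp only [hFnorm]
      rw [MeasureTheory.integral_const_mul]
    exact (((hsa.mul_of_nonneg hsb (fun _ => norm_nonneg _) (fun _ => norm_nonneg _)).mul_right
      _).congr (fun pq => (h1 pq).symm))
  -- value of each integral
  have hval : ∀ pq : ℤ × ℤ, (∫ x : ℝ, F pq x) =
      ((1 / Real.sqrt α) * Complex.exp (-2 * Real.pi * Complex.I * (α₂ * s * t / α)) *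
        Complex.exp (-Real.pi * α₁ * α₂ * s ^ 2 / α) *
        Complex.exp (-Real.pi * t ^ 2 / α) *
        Complex.exp (-Real.pi * (γ₁ - γ₂) ^ 2 / α) *
        Complex.exp (2 * Real.pi * (γ₂ - γ₁) * t / α) *
        Complex.exp (-2 * Real.pi * Complex.I * ((α₂ * γ₁ + α₁ * γ₂) * s / α))) *
      ((starRingEnd ℂ) (a pq.1) * b pq.2 *
            Complex.exp (2 * Real.pi * Complex.I * ((α₁ * r₂ * pq.2 + α₂ * r₁ * pq.1) * s / α)) *
            Complex.exp ((2 * Real.pi / α) * (γ₂ - γ₁) * (r₂ * pq.2 - r₁ * pq.1)) *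
            Complex.exp (-(Real.pi / α) *
              ((r₂ * pq.2 - r₁ * pq.1) ^ 2 + 2 * t * (r₂ * pq.2 - r₁ * pq.1)))) := by
    intro pq
    simp only [hF]
    rw [MeasureTheory.integral_const_mul]
    rw [integral_cexp_quadratic hbneg (c pq) (d pq)]
    rw [aux_sqrt α hαpos]
    rw [show (4:ℂ)*(((-(π*α)) : ℝ):ℂ) = -(4*(π:ℂ)*(α:ℂ)) from by push_cast; ring,
      div_neg, sub_neg_eq_add]
    rw [hc, hd]
    rw [aux_exponent α α₁ α₂ s t γ₁ γ₂ r₁ r₂ pq.1 pq.2 hαpos hα]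
    simp only [Complex.exp_add]
    ring
  simp only [hpt]
  rw [← integral_tsum_of_summable_integral_norm hInt hSumNorm]
  simp only [hval]
  rw [tsum_mul_left]
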